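/- Fix p ≤ -1 and α with 0 < α < 1. Then lim_{r → 1⁺} Θ_p{α, r} = π / √((2 - 2p) + (2 + 2p) α²). -/

import Mathlib

open Real Filter

/-- `F_p(s, α, r) = ((1 - s^{2p})/(1 - r^{2p}))(r² + α²)
  + ((s^{2p} - r^{2p})/(1 - r^{2p}))(1 + α² r²) - s² - α² r² s⁻²`. -/
noncomputable def Fp (p α r s : ℝ) : ℝ :=
  (1 - s ^ (2 * p)) / (1 - r ^ (2 * p)) * (r ^ 2 + α ^ 2) +
  (s ^ (2 * p) - r ^ (2 * p)) / (1 - r ^ (2 * p)) * (1 + α ^ 2 * r ^ 2) -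
  s ^ 2 - α ^ 2 * r ^ 2 * s ^ (-2 : ℝ)

/-- The period function `Θ_p{α, r} = ∫_1^r ds / √(F_p(s, α, r))`. -/
noncomputable def Theta (p α r : ℝ) : ℝ :=
  ∫ s in (1 : ℝ)..r, (Real.sqrt (Fp p α r s))⁻¹

open Set MeasureTheory intervalIntegral

lemma slope_rpow (q : ℝ) :
    Tendsto (fun x : ℝ => ((1+x)^q - 1)/x) (nhdsWithin 0 (Set.Ioi 0)) (nhds q) := by
  have h : HasDerivAt (fun x : ℝ => (1+x)^q) q 0 := by
    have h1 : HasDerivAt (fun x : ℝ => 1+x) 1 0 := (hasDerivAt_id 0).const_add 1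
    have := h1.rpow_const (p := q) (by norm_num)
    simpa using this
  have h2 := (hasDerivAt_iff_tendsto_slope.1 h).mono_left
    (nhdsWithin_mono 0 (fun x hx => ne_of_gt hx))
  refine h2.congr fun x => ?_
  simp [slope_def_field, div_eq_mul_inv, mul_comm]

lemma taylor2_rpow (q : ℝ) :
    Tendsto (fun x : ℝ => ((1+x)^q - 1 - q*x)/x^2) (nhdsWithin 0 (Set.Ioi 0))
      (nhds (q*(q-1)/2)) := by
  have hIoo : Set.Ioo (0:ℝ) 1 ∈ nhdsWithin (0:ℝ) (Set.Ioi 0) :=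
    Ioo_mem_nhdsGT_of_mem (by constructor <;> norm_num)
  apply HasDerivAt.lhopital_zero_nhdsGT
    (f' := fun x : ℝ => q*(1+x)^(q-1) - q) (g' := fun x : ℝ => 2*x)
  · filter_upwards [hIoo] with x hx
    have h1 : HasDerivAt (fun x : ℝ => 1+x) 1 x := (hasDerivAt_id x).const_add 1
    have h2 := h1.rpow_const (p := q) (Or.inl (by nlinarith [hx.1]))
    have h3 : HasDerivAt (fun x : ℝ => q*x) q x := by
      simpa using (hasDerivAt_id x).const_mul q
    exact ((h2.sub_const 1).sub h3).congr_deriv (by ring)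
  · filter_upwards with x
    simpa using hasDerivAt_pow 2 x
  · filter_upwards [self_mem_nhdsWithin] with x hx
    have : (0:ℝ) < x := hx
    positivity
  · have hc : ContinuousAt (fun x : ℝ => (1+x)^q - 1 - q*x) 0 := by
      have hin : ContinuousAt (fun x : ℝ => 1+x) 0 := by fun_prop
      have : ContinuousAt (fun x : ℝ => (1+x)^q) 0 :=
        ContinuousAt.comp (Real.continuousAt_rpow_const (1+0) q (Or.inl (by norm_num))) hin
      fun_prop
    have := hc.tendsto.mono_left (nhdsWithin_le_nhds (s := Set.Ioi (0:ℝ)))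
    simpa using this
  · have : Tendsto (fun x : ℝ => x^2) (nhds 0) (nhds 0) := by
      simpa using (continuous_pow 2).tendsto (0:ℝ)
    exact this.mono_left nhdsWithin_le_nhds
  · have h := (slope_rpow (q-1)).const_mul (q/2)
    have : (q/2) * (q-1) = q*(q-1)/2 := by ring
    rw [this] at h
    refine h.congr' ?_
    filter_upwards [self_mem_nhdsWithin] with x hx
    have hx0 : (x:ℝ) ≠ 0 := ne_of_gt hx
    field_simp

lemma Fp_eq (p α r s : ℝ) (hs : 0 < s) (hK : 1 - r^(2*p) ≠ 0) :
    Fp p α r s = ((r^2-s^2)*(s^2-α^2) - (1-α^2)*(r^2-1)*(s^(2*p)*s^2)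
      + (s^2-1)*(r^(2*p)*(s^2-α^2*r^2))) / ((1 - r^(2*p)) * s^2) := by
  have h2 : s ^ (-2 : ℝ) = (s^2)⁻¹ := by
    rw [Real.rpow_neg hs.le, Real.rpow_two]
  unfold Fp
  rw [h2]
  have hs2 : s^2 ≠ 0 := by positivity
  field_simp
  ring

lemma Fp_lb (p α r : ℝ) (hp : p ≤ -1) (hα₀ : 0 < α) (hα₁ : α < 1) (hr : 1 < r)
    {t : ℝ} (ht : t ∈ Set.Icc (0:ℝ) 1) :
    (r-1)^2 * (t*(1-t)) ≤ Fp p α r (1 + (r-1)*t) := by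
  have hr0 : (0:ℝ) < r := lt_trans one_pos hr
  have hq : 2*p < 0 := by linarith
  have hu : r ^ (2*p) < 1 := Real.rpow_lt_one_of_one_lt_of_neg hr hq
  have hK : 0 < 1 - r^(2*p) := by linarith
  have hKne : 1 - r^(2*p) ≠ 0 := ne_of_gt hK
  set c1 : ℝ := ((1+α^2*r^2) - (r^2+α^2))/(1 - r^(2*p)) with hc1def
  have hc1 : c1 ≤ 0 := by
    apply div_nonpos_of_nonpos_of_nonneg _ hK.le
    nlinarith [mul_pos (show (0:ℝ) < 1 - α^2 by nlinarith)
      (show (0:ℝ) < r^2 - 1 by nlinarith)]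
  have hD : (0:ℝ) < α^2*r^2 := by positivity
  set g : ℝ → ℝ := fun s => Fp p α r s - (s-1)*(r-s) with hgdef
  set g' : ℝ → ℝ := fun s =>
    2*p*c1*s^(2*p-1) - 2*s + 2*(α^2*r^2)*s^(-3:ℝ) - (r+1-2*s) with hg'def
  set g'' : ℝ → ℝ := fun s =>
    2*p*c1*((2*p-1)*s^(2*p-2)) - 2 + 2*(α^2*r^2)*(-3*s^(-4:ℝ)) + 2 with hg''def
  have hderiv : ∀ x : ℝ, 0 < x → HasDerivAt g (g' x) x := by
    intro x hx
    have hA : HasDerivAt (fun s:ℝ => s^(2*p)) (2*p * x^(2*p-1)) x :=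
      Real.hasDerivAt_rpow_const (Or.inl hx.ne')
    have hB : HasDerivAt (fun s:ℝ => s^(-2:ℝ)) ((-2) * x^(-3:ℝ)) x := by
      have h := Real.hasDerivAt_rpow_const (x := x) (p := (-2:ℝ)) (Or.inl hx.ne')
      convert h using 2
      norm_num
    have h1 : HasDerivAt (fun s:ℝ => (1 - s^(2*p))/(1 - r^(2*p)) * (r^2+α^2))
        ((-(2*p * x^(2*p-1)))/(1 - r^(2*p)) * (r^2+α^2)) x :=
      ((hA.const_sub 1).div_const _).mul_const _
    have h2 : HasDerivAt (fun s:ℝ => (s^(2*p) - r^(2*p))/(1 - r^(2*p)) * (1+α^2*r^2))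
        ((2*p * x^(2*p-1))/(1 - r^(2*p)) * (1+α^2*r^2)) x :=
      ((hA.sub_const _).div_const _).mul_const _
    have h3 : HasDerivAt (fun s:ℝ => s^2) (2*x) x := by
      simpa using hasDerivAt_pow 2 x
    have h4 : HasDerivAt (fun s:ℝ => α^2*r^2 * s^(-2:ℝ)) (α^2*r^2 * ((-2) * x^(-3:ℝ))) x :=
      hB.const_mul _
    have h5 : HasDerivAt (fun s:ℝ => (s-1)*(r-s)) (1*(r-x) + (x-1)*(-1)) x :=
      ((hasDerivAt_id x).sub_const 1).mul ((hasDerivAt_id x).const_sub r)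
    have h6 := (((h1.add h2).sub h3).sub h4).sub h5
    have hfun : g = fun s => (1 - s^(2*p))/(1 - r^(2*p)) * (r^2+α^2) +
        (s^(2*p) - r^(2*p))/(1 - r^(2*p)) * (1+α^2*r^2) - s^2 - α^2*r^2 * s^(-2:ℝ)
        - (s-1)*(r-s) := by
      funext s
      simp only [hgdef, Fp]
    rw [hfun]
    refine h6.congr_deriv ?_
    simp only [hg'def, hc1def]
    field_simp
    try ring
  have hderiv2 : ∀ x : ℝ, 0 < x → HasDerivAt g' (g'' x) x := by
    intro x hx
    have hA : HasDerivAt (fun s:ℝ => s^(2*p-1)) ((2*p-1) * x^(2*p-1-1)) x :=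
      Real.hasDerivAt_rpow_const (Or.inl hx.ne')
    have hB : HasDerivAt (fun s:ℝ => s^(-3:ℝ)) ((-3) * x^(-3-1:ℝ)) x :=
      Real.hasDerivAt_rpow_const (Or.inl hx.ne')
    have h2x : HasDerivAt (fun s:ℝ => 2*s) 2 x := by
      simpa using (hasDerivAt_id x).const_mul (2:ℝ)
    have hlin : HasDerivAt (fun s:ℝ => r+1-2*s) (-2) x := by
      simpa using h2x.const_sub (r+1)
    have h1 := (hA.const_mul (2*p*c1)).sub h2x
    have h2 := h1.add (hB.const_mul (2*(α^2*r^2)))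
    have h3 := h2.sub hlin
    rw [hg'def]
    refine h3.congr_deriv ?_
    rw [show (2*p-1-1 : ℝ) = 2*p-2 by ring, show ((-3:ℝ)-1) = (-4:ℝ) by ring]
    ring
  have hcont : ContinuousOn g (Set.Icc 1 r) := by
    intro x hx
    have hx0 : (0:ℝ) < x := lt_of_lt_of_le one_pos hx.1
    exact (hderiv x hx0).continuousAt.continuousWithinAt
  have hg''le : ∀ x : ℝ, 0 < x → g'' x ≤ 0 := by
    intro x hx
    have e1 : (0:ℝ) < x^(2*p-2) := Real.rpow_pos_of_pos hx _
    have e2 : (0:ℝ) < x^(-4:ℝ) := Real.rpow_pos_of_pos hx _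
    have e3 : 0 ≤ 2*p*c1 := by
      nlinarith [mul_nonneg (neg_nonneg.mpr hq.le) (neg_nonneg.mpr hc1)]
    have h4a : 0 ≤ 2*p*c1 * x^(2*p-2) := mul_nonneg e3 e1.le
    have e4 : 2*p*c1*((2*p-1)*x^(2*p-2)) ≤ 0 := by nlinarith [h4a]
    have e5 : 2*(α^2*r^2)*(-3*x^(-4:ℝ)) ≤ 0 := by nlinarith [mul_pos hD e2]
    simp only [hg''def]
    linarith
  have hconc : ConcaveOn ℝ (Set.Icc 1 r) g := by
    apply concaveOn_of_hasDerivWithinAt2_nonpos (f' := g') (f'' := g'')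
      (convex_Icc 1 r) hcont
    · intro x hx
      rw [interior_Icc] at hx
      exact (hderiv x (lt_trans one_pos hx.1)).hasDerivWithinAt
    · intro x hx
      rw [interior_Icc] at hx
      exact (hderiv2 x (lt_trans one_pos hx.1)).hasDerivWithinAt
    · intro x hx
      rw [interior_Icc] at hx
      exact hg''le x (lt_trans one_pos hx.1)
  have g1 : g 1 = 0 := by
    simp only [hgdef, Fp, Real.one_rpow]
    rw [div_self hKne]
    norm_num
  have gr : g r = 0 := by
    simp only [hgdef, Fp]
    rw [Real.rpow_neg hr0.le, Real.rpow_two, div_self hKne]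
    have hr2 : r^2 ≠ 0 := by positivity
    field_simp
    try ring
  have hmem1 : (1:ℝ) ∈ Set.Icc 1 r := ⟨le_refl _, hr.le⟩
  have hmemr : r ∈ Set.Icc 1 r := ⟨hr.le, le_refl _⟩
  have key := hconc.2 hmem1 hmemr (by linarith [ht.2] : (0:ℝ) ≤ 1 - t) ht.1
    (by ring : (1-t) + t = 1)
  rw [smul_eq_mul, smul_eq_mul, smul_eq_mul, smul_eq_mul, g1, gr] at key
  rw [show (1-t) * 1 + t * r = 1 + (r-1)*t by ring] at key
  have hgv : g (1 + (r-1)*t) = Fp p α r (1 + (r-1)*t) - (r-1)^2*(t*(1-t)) := by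
    simp only [hgdef]
    ring
  rw [hgv] at key
  linarith

lemma bound_integrable' :
    IntervalIntegrable (fun t : ℝ => (Real.sqrt (t*(1-t)))⁻¹) volume 0 (1/2) := by
  have hg : IntervalIntegrable (fun t : ℝ => Real.sqrt 2 * t ^ (-(1/2) : ℝ)) volume 0 (1/2) :=
    (intervalIntegral.intervalIntegrable_rpow' (by norm_num)).const_mul _
  apply hg.mono_fun
  · apply Measurable.aestronglyMeasurable
    have hm : Measurable fun t : ℝ => t*(1-t) := by fun_prop
    exact hm.sqrt.inv
  · rw [Filter.EventuallyLE, ae_restrict_iff' measurableSet_uIoc]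
    refine Filter.Eventually.of_forall fun x hx => ?_
    rw [Set.uIoc_of_le (by norm_num : (0:ℝ) ≤ 1/2)] at hx
    obtain ⟨hx0, hx12⟩ := hx
    have h1x : (1/2 : ℝ) ≤ 1 - x := by linarith
    have hs1 : Real.sqrt (1/2) ≤ Real.sqrt (1-x) := Real.sqrt_le_sqrt h1x
    have hs2 : (0:ℝ) < Real.sqrt (1/2) := Real.sqrt_pos.2 (by norm_num)
    have hsx : (0:ℝ) < Real.sqrt x := Real.sqrt_pos.2 hx0
    have hrw : Real.sqrt (x*(1-x)) = Real.sqrt x * Real.sqrt (1-x) :=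
      Real.sqrt_mul hx0.le _
    have hxr : x ^ (-(1/2) : ℝ) = (Real.sqrt x)⁻¹ := by
      rw [Real.rpow_neg hx0.le, Real.sqrt_eq_rpow]
    have hhalf : Real.sqrt (1/2) = (Real.sqrt 2)⁻¹ := by
      rw [show (1/2 : ℝ) = 2⁻¹ by norm_num, Real.sqrt_inv]
    have hlhs : ‖(Real.sqrt (x*(1-x)))⁻¹‖ = (Real.sqrt x * Real.sqrt (1-x))⁻¹ := by
      rw [hrw, Real.norm_eq_abs, abs_of_nonneg (by positivity)]
    have hrhs : ‖Real.sqrt 2 * x ^ (-(1/2) : ℝ)‖ = Real.sqrt 2 * (Real.sqrt x)⁻¹ := by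
      rw [hxr, Real.norm_eq_abs, abs_of_nonneg (by positivity)]
    have h3 : (Real.sqrt (1-x))⁻¹ ≤ Real.sqrt 2 := by
      have h4 : (Real.sqrt 2)⁻¹ ≤ Real.sqrt (1-x) := hhalf ▸ hs1
      calc (Real.sqrt (1-x))⁻¹ ≤ ((Real.sqrt 2)⁻¹)⁻¹ :=
            inv_anti₀ (by positivity) h4
        _ = Real.sqrt 2 := inv_inv _
    rw [hlhs, hrhs, mul_inv]
    calc (Real.sqrt x)⁻¹ * (Real.sqrt (1-x))⁻¹ ≤ (Real.sqrt x)⁻¹ * Real.sqrt 2 :=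
          mul_le_mul_of_nonneg_left h3 (by positivity)
      _ = Real.sqrt 2 * (Real.sqrt x)⁻¹ := mul_comm _ _

lemma bound_integrable :
    IntervalIntegrable (fun t : ℝ => (Real.sqrt (t*(1-t)))⁻¹) volume 0 1 := by
  apply bound_integrable'.trans
  have h2 := bound_integrable'.comp_sub_left 1
  have hfun : (fun x : ℝ => (Real.sqrt ((1-x)*(1-(1-x))))⁻¹)
      = fun t : ℝ => (Real.sqrt (t*(1-t)))⁻¹ := by
    funext x
    rw [show (1-x)*(1-(1-x)) = x*(1-x) by ring]
  rw [hfun] at h2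
  norm_num at h2
  exact h2.symm

lemma bound_integral : ∫ t in (0:ℝ)..1, (Real.sqrt (t*(1-t)))⁻¹ = π := by
  have h := intervalIntegral.integral_eq_sub_of_hasDeriv_right_of_le
    (f := fun t : ℝ => Real.arcsin (2*t-1))
    (f' := fun t : ℝ => (Real.sqrt (t*(1-t)))⁻¹)
    (by norm_num : (0:ℝ) ≤ 1)
    (Real.continuous_arcsin.comp (by fun_prop)).continuousOn
    ?_ bound_integrable
  · rw [h]
    norm_num [Real.arcsin_one, Real.arcsin_neg_one]
  · intro x hx
    have h1 : 2*x-1 ≠ -1 := by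
      intro h; rw [sub_eq_iff_eq_add] at h; nlinarith [hx.1]
    have h2 : 2*x-1 ≠ 1 := by
      intro h; nlinarith [hx.2]
    have ha := Real.hasDerivAt_arcsin h1 h2
    have hin : HasDerivAt (fun t : ℝ => 2*t-1) 2 x := by
      simpa using ((hasDerivAt_id x).const_mul (2:ℝ)).sub_const 1
    have hcomp := ha.comp x hin
    have hval : 1 / Real.sqrt (1 - (2*x-1)^2) * 2 = (Real.sqrt (x*(1-x)))⁻¹ := by
      rw [show 1 - (2*x-1)^2 = 4*(x*(1-x)) by ring,
        show (4:ℝ)*(x*(1-x)) = 2^2*(x*(1-x)) by norm_num,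
        Real.sqrt_mul (by positivity), Real.sqrt_sq (by norm_num : (0:ℝ) ≤ 2)]
      have hpos : 0 < Real.sqrt (x*(1-x)) :=
        Real.sqrt_pos.2 (by nlinarith [hx.1, hx.2])
      field_simp
    show HasDerivWithinAt _ ((Real.sqrt (x*(1-x)))⁻¹) (Set.Ioi x) x
    rw [← hval]
    exact hcomp.hasDerivWithinAt

lemma tend_cont {f : ℝ → ℝ} (hf : Continuous f) {y : ℝ} (h : f 0 = y) :
    Tendsto f (nhdsWithin 0 (Set.Ioi 0)) (nhds y) :=
  h ▸ (hf.tendsto 0).mono_left nhdsWithin_le_nhds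

lemma key_tendsto (p α : ℝ) (hp : p ≤ -1) (hα₀ : 0 < α) (hα₁ : α < 1)
    {t : ℝ} (ht : t ∈ Set.Ioo (0:ℝ) 1) :
    Tendsto (fun e : ℝ => Fp p α (1+e) (1+e*t) / e^2) (nhdsWithin 0 (Set.Ioi 0))
      (nhds (((2-2*p) + (2+2*p)*α^2) * (t*(1-t)))) := by
  obtain ⟨ht0, ht1⟩ := ht
  have hq : 2*p < 0 := by linarith
  have h2p : -(2*p) ≠ 0 := ne_of_gt (by linarith)
  -- pieces
  have tQ : Tendsto (fun e : ℝ => 2*p*t*((t-1)*(1+3*α^2)) +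
      e * (2*p*t*(2*(t^2*(1+α^2) - t - α^2))) +
      e^2 * (2*p*t*(t^3 - t^2 + α^2*(t^2 - t)))) (nhdsWithin 0 (Set.Ioi 0))
      (nhds (2*p*t*((t-1)*(1+3*α^2)))) := by
    have hc : Continuous (fun e : ℝ => 2*p*t*((t-1)*(1+3*α^2)) +
      e * (2*p*t*(2*(t^2*(1+α^2) - t - α^2))) +
      e^2 * (2*p*t*(t^3 - t^2 + α^2*(t^2 - t)))) := by fun_prop
    exact tend_cont hc (by norm_num)
  have tBv : Tendsto (fun e : ℝ => -((1-α^2)*(2+e)*(1+e*t)^2)) (nhdsWithin 0 (Set.Ioi 0))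
      (nhds (-((1-α^2)*2))) := by
    have hc : Continuous (fun e : ℝ => -((1-α^2)*(2+e)*(1+e*t)^2)) := by fun_prop
    exact tend_cont hc (by norm_num)
  have tBu : Tendsto (fun e : ℝ => t*(2+e*t)*((1+e*t)^2 - α^2*(1+e)^2))
      (nhdsWithin 0 (Set.Ioi 0)) (nhds (t*2*(1 - α^2))) := by
    have hc : Continuous (fun e : ℝ => t*(2+e*t)*((1+e*t)^2 - α^2*(1+e)^2)) := by fun_prop
    exact tend_cont hc (by norm_num)
  have tRu : Tendsto (fun e : ℝ => ((1+e)^(2*p) - 1 - 2*p*e)/e^2)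
      (nhdsWithin 0 (Set.Ioi 0)) (nhds (2*p*(2*p-1)/2)) := taylor2_rpow (2*p)
  have tRv : Tendsto (fun e : ℝ => ((1+e*t)^(2*p) - 1 - 2*p*t*e)/e^2)
      (nhdsWithin 0 (Set.Ioi 0)) (nhds (t^2 * (2*p*(2*p-1)/2))) := by
    have hmap : Tendsto (fun e : ℝ => e*t) (nhdsWithin 0 (Set.Ioi 0))
        (nhdsWithin 0 (Set.Ioi 0)) := by
      rw [tendsto_nhdsWithin_iff]
      constructor
      · have : Tendsto (fun e : ℝ => e*t) (nhds 0) (nhds (0*t)) :=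
          (continuous_id.mul continuous_const).tendsto 0
        simpa using this.mono_left nhdsWithin_le_nhds
      · filter_upwards [self_mem_nhdsWithin] with e he
        exact mul_pos he ht0
    have hcomp := (taylor2_rpow (2*p)).comp hmap
    have hmul := hcomp.const_mul (t^2)
    refine hmul.congr' ?_
    filter_upwards [self_mem_nhdsWithin] with e he
    have he0 : e ≠ 0 := ne_of_gt he
    have ht0' : t ≠ 0 := ne_of_gt ht0
    show t^2 * (((1+e*t)^(2*p) - 1 - 2*p*(e*t))/(e*t)^2)
        = ((1+e*t)^(2*p) - 1 - 2*p*t*e)/e^2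
    field_simp
  have tK : Tendsto (fun e : ℝ => (1 - (1+e)^(2*p))/e) (nhdsWithin 0 (Set.Ioi 0))
      (nhds (-(2*p))) := by
    have := (slope_rpow (2*p)).neg
    refine this.congr fun x => ?_
    rw [← neg_div, neg_sub]
  have tKinv := tK.inv₀ h2p
  have tS : Tendsto (fun e : ℝ => (((1+e*t)^2 : ℝ))⁻¹) (nhdsWithin 0 (Set.Ioi 0))
      (nhds (((1+0*t)^2 : ℝ)⁻¹)) := by
    have hc : Continuous (fun e : ℝ => ((1+e*t)^2 : ℝ)) := by fun_prop
    exact (((hc.tendsto 0).mono_left nhdsWithin_le_nhds).inv₀ (by norm_num))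
  have TH := (((tQ.add (tBv.mul tRv)).add (tBu.mul tRu)).mul tKinv).mul tS
  have hLeq : (2*p*t*((t-1)*(1+3*α^2)) + -((1-α^2)*2) * (t^2 * (2*p*(2*p-1)/2))
      + t*2*(1-α^2) * (2*p*(2*p-1)/2)) * (-(2*p))⁻¹ * ((1+0*t)^2 : ℝ)⁻¹
      = ((2-2*p) + (2+2*p)*α^2) * (t*(1-t)) := by
    rw [show ((1:ℝ)+0*t) = 1 by norm_num]
    have hpne : p ≠ 0 := by intro h; rw [h] at hp; norm_num at hp
    field_simp [hpne]
    ring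
  rw [hLeq] at TH
  refine TH.congr' ?_
  filter_upwards [self_mem_nhdsWithin] with e he
  have he0 : (0:ℝ) < e := he
  have hene : e ≠ 0 := ne_of_gt he0
  have hs : (0:ℝ) < 1+e*t := by nlinarith
  have hr1 : (1:ℝ) < 1+e := by linarith
  have hu : (1+e)^(2*p) < 1 := Real.rpow_lt_one_of_one_lt_of_neg hr1 hq
  have hKne : 1 - (1+e)^(2*p) ≠ 0 := ne_of_gt (by linarith)
  have hsne : (1+e*t) ≠ 0 := ne_of_gt hs
  show _ = Fp p α (1+e) (1+e*t) / e^2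
  rw [Fp_eq p α (1+e) (1+e*t) hs hKne]
  field_simp
  ring

theorem stmt_10 (p α : ℝ) (hp : p ≤ -1) (hα₀ : 0 < α) (hα₁ : α < 1) :
    Tendsto (fun r : ℝ => Theta p α r) (nhdsWithin 1 (Set.Ioi 1))
      (nhds (π / Real.sqrt ((2 - 2 * p) + (2 + 2 * p) * α ^ 2))) := by
  have hC4 : (4:ℝ) ≤ (2 - 2*p) + (2 + 2*p)*α^2 := by
    nlinarith [mul_nonneg (show (0:ℝ) ≤ -(2+2*p) by linarith)
      (show (0:ℝ) ≤ 1-α^2 by nlinarith)]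
  have hCpos : (0:ℝ) < (2 - 2*p) + (2 + 2*p)*α^2 := by linarith
  have hone : ∀ᵐ x : ℝ ∂volume, x ≠ 1 := by
    have hset : {x : ℝ | ¬ x ≠ 1} = {1} := by ext x; simp
    rw [MeasureTheory.ae_iff, hset]
    exact measure_singleton 1
  have hmeasG : ∀ r : ℝ,
      Measurable (fun x : ℝ => (Real.sqrt (Fp p α r (1+(r-1)*x) / (r-1)^2))⁻¹) := by
    intro r
    have hm : Measurable (fun x : ℝ => 1+(r-1)*x) := by fun_prop
    have hFm : Measurable (fun s : ℝ => Fp p α r s) := by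
      unfold Fp
      fun_prop
    exact (((hFm.comp hm).div_const _).sqrt).inv
  -- dominated convergence
  have TInt : Tendsto (fun r : ℝ =>
      ∫ x in (0:ℝ)..1, (Real.sqrt (Fp p α r (1+(r-1)*x) / (r-1)^2))⁻¹)
      (nhdsWithin 1 (Set.Ioi 1))
      (nhds (∫ x in (0:ℝ)..1,
        (Real.sqrt (((2 - 2*p) + (2 + 2*p)*α^2) * (x*(1-x))))⁻¹)) := by
    apply intervalIntegral.tendsto_integral_filter_of_dominated_convergence
      (bound := fun x : ℝ => (Real.sqrt (x*(1-x)))⁻¹)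
    · exact Filter.Eventually.of_forall fun r => (hmeasG r).aestronglyMeasurable
    · filter_upwards [self_mem_nhdsWithin] with r hr
      have hr1 : (1:ℝ) < r := hr
      filter_upwards [hone] with x hxne hx
      rw [Set.uIoc_of_le (by norm_num : (0:ℝ) ≤ 1)] at hx
      have hx1 : x < 1 := lt_of_le_of_ne hx.2 hxne
      have hx0 : 0 < x := hx.1
      have hxx : 0 < x*(1-x) := by nlinarith
      have hlb := Fp_lb p α r hp hα₀ hα₁ hr1 (t := x) ⟨hx0.le, hx.2⟩
      have hre : (0:ℝ) < (r-1)^2 := pow_pos (by linarith) 2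
      have hFb : x*(1-x) ≤ Fp p α r (1+(r-1)*x) / (r-1)^2 := by
        rw [le_div_iff₀ hre]
        linarith [hlb, mul_comm (x*(1-x)) ((r-1)^2)]
      rw [Real.norm_eq_abs, abs_of_nonneg (by positivity)]
      exact inv_anti₀ (Real.sqrt_pos.2 hxx) (Real.sqrt_le_sqrt hFb)
    · exact bound_integrable
    · filter_upwards [hone] with x hxne hx
      rw [Set.uIoc_of_le (by norm_num : (0:ℝ) ≤ 1)] at hx
      have hx1 : x < 1 := lt_of_le_of_ne hx.2 hxne
      have hxIoo : x ∈ Set.Ioo (0:ℝ) 1 := ⟨hx.1, hx1⟩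
      have hkey := key_tendsto p α hp hα₀ hα₁ hxIoo
      have hmap : Tendsto (fun r : ℝ => r - 1) (nhdsWithin 1 (Set.Ioi 1))
          (nhdsWithin 0 (Set.Ioi 0)) := by
        rw [tendsto_nhdsWithin_iff]
        constructor
        · have : Tendsto (fun r : ℝ => r - 1) (nhds 1) (nhds (1-1)) :=
            (continuous_id.sub continuous_const).tendsto 1
          simpa using this.mono_left nhdsWithin_le_nhds
        · filter_upwards [self_mem_nhdsWithin] with r hr
          exact sub_pos.2 (Set.mem_Ioi.1 hr)
      have hcomp := hkey.comp hmap
      have hcomp' : Tendsto (fun r : ℝ => Fp p α r (1+(r-1)*x) / (r-1)^2)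
          (nhdsWithin 1 (Set.Ioi 1))
          (nhds (((2 - 2*p) + (2 + 2*p)*α^2) * (x*(1-x)))) := by
        refine hcomp.congr fun r => ?_
        simp only [Function.comp_apply]
        rw [show (1:ℝ)+(r-1) = r by ring]
      have hxpos : 0 < ((2 - 2*p) + (2 + 2*p)*α^2) * (x*(1-x)) := by
        apply mul_pos hCpos
        nlinarith [hx.1]
      have hsq : ContinuousAt (fun y : ℝ => (Real.sqrt y)⁻¹)
          (((2 - 2*p) + (2 + 2*p)*α^2) * (x*(1-x))) :=
        Real.continuous_sqrt.continuousAt.inv₀ (ne_of_gt (Real.sqrt_pos.2 hxpos))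
      exact hsq.tendsto.comp hcomp'
  -- value of the limit integral
  have hIV : (∫ x in (0:ℝ)..1,
      (Real.sqrt (((2 - 2*p) + (2 + 2*p)*α^2) * (x*(1-x))))⁻¹)
      = π / Real.sqrt ((2 - 2*p) + (2 + 2*p)*α^2) := by
    have hfx : ∀ x : ℝ, (Real.sqrt (((2 - 2*p) + (2 + 2*p)*α^2) * (x*(1-x))))⁻¹
        = (Real.sqrt ((2 - 2*p) + (2 + 2*p)*α^2))⁻¹ * (Real.sqrt (x*(1-x)))⁻¹ := by
      intro x
      rw [Real.sqrt_mul hCpos.le, mul_inv]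
    simp_rw [hfx]
    rw [intervalIntegral.integral_const_mul, bound_integral, inv_mul_eq_div]
  rw [hIV] at TInt
  -- Theta equals the rescaled integral eventually
  refine TInt.congr' ?_
  filter_upwards [self_mem_nhdsWithin] with r hr
  have hr1 : (1:ℝ) < r := hr
  have hrne : r - 1 ≠ 0 := sub_ne_zero.2 (ne_of_gt hr1)
  have hsub := intervalIntegral.integral_comp_mul_add (a := (0:ℝ)) (b := 1)
    (f := fun s => (Real.sqrt (Fp p α r s))⁻¹) (c := r-1) hrne 1
  rw [show (r-1)*0+1 = (1:ℝ) by ring, show (r-1)*1+1 = r by ring] at hsub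
  have step1 : (∫ x in (0:ℝ)..1, (r-1) * (Real.sqrt (Fp p α r ((r-1)*x+1)))⁻¹)
      = Theta p α r := by
    rw [intervalIntegral.integral_const_mul, hsub, smul_eq_mul, ← mul_assoc,
      mul_inv_cancel₀ hrne, one_mul]
    rfl
  rw [← step1]
  apply intervalIntegral.integral_congr
  intro x hx
  rw [Set.uIcc_of_le (by norm_num : (0:ℝ) ≤ 1)] at hx
  have hFnn : 0 ≤ Fp p α r (1+(r-1)*x) := by
    refine le_trans ?_ (Fp_lb p α r hp hα₀ hα₁ hr1 hx)
    have : 0 ≤ x*(1-x) := mul_nonneg hx.1 (by linarith [hx.2])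
    positivity
  show (Real.sqrt (Fp p α r (1+(r-1)*x) / (r-1)^2))⁻¹
      = (r-1) * (Real.sqrt (Fp p α r ((r-1)*x+1)))⁻¹
  rw [show (r-1)*x+1 = 1+(r-1)*x by ring]
  rw [Real.sqrt_div hFnn, show Real.sqrt ((r-1)^2) = r-1 from Real.sqrt_sq (by linarith),
    inv_div, div_eq_mul_inv]
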